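/- Let V be a nonzero algebraic B-representation with weight decomposition (as in the context) satisfying property (P), and let m be the smallest weight of V. Let q be a power of p. Then for every i ∈ ℤ and every nonzero f ∈ V_i, the following are equivalent: (a) for every j ∈ ℤ with (q−1)·j < (q+1)·i, the component of ρ(u₂)f in V_j (with respect to the weight decomposition) is zero; (b) (q+1)·i ≤ (q−1)·m. -/

import Mathlib

open Matrix

/-- The lower-triangular Borel subgroup `B ⊂ SL₂(k)`. -/
def lowerB (k : Type*) [Field k] : Subgroup (Matrix.SpecialLinearGroup (Fin 2) k) where
  carrier := {A | (A : Matrix (Fin 2) (Fin 2) k) 0 1 = 0}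
  one_mem' := by
    show ((1 : Matrix.SpecialLinearGroup (Fin 2) k) : Matrix (Fin 2) (Fin 2) k) 0 1 = 0
    simp
  mul_mem' := by
    intro A B hA hB
    simp only [Set.mem_setOf_eq] at *
    show ((A * B : Matrix.SpecialLinearGroup (Fin 2) k) : Matrix (Fin 2) (Fin 2) k) 0 1 = 0
    rw [Matrix.SpecialLinearGroup.coe_mul, Matrix.mul_apply, Fin.sum_univ_two, hA, hB]
    ring
  inv_mem' := by
    intro A hA
    simp only [Set.mem_setOf_eq] at *
    show ((A⁻¹ : Matrix.SpecialLinearGroup (Fin 2) k) : Matrix (Fin 2) (Fin 2) k) 0 1 = 0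
    rw [Matrix.SpecialLinearGroup.coe_inv, Matrix.adjugate_fin_two]
    simp [hA]

/-- The lower-triangular unipotent element `u(z) = [[1,0],[z,1]]` of `B`. -/
def uB {k : Type*} [Field k] (z : k) : lowerB k :=
  ⟨⟨!![1, 0; z, 1], by simp [Matrix.det_fin_two_of]⟩,
    show (!![1, 0; z, 1] : Matrix (Fin 2) (Fin 2) k) 0 1 = 0 by simp⟩

/-- The diagonal element `diag(x, x⁻¹)` of `B`. -/
def dB {k : Type*} [Field k] (x : kˣ) : lowerB k :=
  ⟨⟨!![(x : k), 0; 0, ((x⁻¹ : kˣ) : k)], by simp [Matrix.det_fin_two_of]⟩,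
    show (!![(x : k), 0; 0, ((x⁻¹ : kˣ) : k)] : Matrix (Fin 2) (Fin 2) k) 0 1 = 0 by simp⟩

lemma vec_poly_eq' {k : Type*} {V : Type*} [Field k] [Infinite k] [AddCommGroup V] [Module k V]
    (n : ℕ) (g h : ℕ → V)
    (H : ∀ z : k, ∑ j ∈ Finset.range n, z ^ j • g j = ∑ j ∈ Finset.range n, z ^ j • h j)
    {j : ℕ} (hj : j ∈ Finset.range n) : g j = h j := by
  rw [← sub_eq_zero, ← Module.forall_dual_apply_eq_zero_iff k]
  intro φ
  set P : Polynomial k := ∑ l ∈ Finset.range n, Polynomial.C (φ (g l - h l)) * Polynomial.X ^ l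
    with hP
  have hev : ∀ z : k, P.eval z = 0 := by
    intro z
    have h2 : ∑ l ∈ Finset.range n, z ^ l • (g l - h l) = 0 := by
      simp only [smul_sub, Finset.sum_sub_distrib, H z, sub_self]
    calc P.eval z = φ (∑ l ∈ Finset.range n, z ^ l • (g l - h l)) := by
          simp [hP, Polynomial.eval_finset_sum, map_sum, mul_comm]
      _ = 0 := by rw [h2, map_zero]
  have hP0 : P = 0 := Polynomial.zero_of_eval_zero P hev
  have hc : P.coeff j = φ (g j - h j) := by
    simp [hP, Polynomial.finset_sum_coeff, sub_mul, Polynomial.coeff_sub, Polynomial.coeff_C_mul,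
      Polynomial.coeff_X_pow, Finset.sum_sub_distrib, Finset.mem_range.mp hj]
  rw [hP0] at hc
  simpa using hc.symm

lemma uB_mul {k : Type*} [Field k] (z w : k) : uB z * uB w = uB (z + w) := by
  apply Subtype.ext
  apply Subtype.ext
  show (!![1,0;z,1] : Matrix (Fin 2) (Fin 2) k) * !![1,0;w,1] = !![1,0;z+w,1]
  ext i j
  fin_cases i <;> fin_cases j <;> simp [Matrix.mul_apply, Fin.sum_univ_two]

/-- Proposition 4.10 of the paper: for a nonzero algebraic `B`-representation with
weight decomposition satisfying property (P), a nonzero weight vector `f ∈ V_i` has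
`ρ(u₂)f` with vanishing components in all `V_j` with `(q−1)j < (q+1)i` if and only if
`(q+1)i ≤ (q−1)m`, where `m` is the smallest weight. -/
theorem global_sections_of_propertyP
    {k : Type*} [Field k] [IsAlgClosed k] (p : ℕ) [Fact p.Prime] [CharP k p]
    (q n : ℕ) (hn : 1 ≤ n) (hq : q = p ^ n)
    {V : Type*} [AddCommGroup V] [Module k V] [FiniteDimensional k V] [Nontrivial V]
    (ρ : lowerB k →* LinearMap.GeneralLinearGroup k V)
    (Vw : ℤ → Submodule k V)
    (hInt : DirectSum.IsInternal Vw)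
    (hfin : {i : ℤ | Vw i ≠ ⊥}.Finite)
    (hdiag : ∀ (x : kˣ) (i : ℤ), ∀ v ∈ Vw i, (ρ (dB x) : V →ₗ[k] V) v = ((x : k) ^ i) • v)
    (E : ℕ → V →ₗ[k] V) (hE0 : E 0 = LinearMap.id)
    (hEshift : ∀ (j : ℕ) (i : ℤ), ∀ v ∈ Vw i, E j v ∈ Vw (i - 2 * j))
    (N : ℕ) (hEbound : ∀ j : ℕ, N < j → E j = 0)
    (hu : ∀ z : k, (ρ (uB z) : V →ₗ[k] V) = ∑ j ∈ Finset.range (N + 1), z ^ j • E j)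
    (hP : Module.finrank k
      ↥(⨅ z : k, LinearMap.ker ((ρ (uB z) : V →ₗ[k] V) - LinearMap.id)) = 1)
    (m : ℤ) (hm : Vw m ≠ ⊥) (hmin : ∀ i : ℤ, Vw i ≠ ⊥ → m ≤ i) :
    ∀ i : ℤ, ∀ f ∈ Vw i, f ≠ 0 →
      (((ρ (uB 1) : V →ₗ[k] V) f ∈
          ⨆ j ∈ {j : ℤ | ((q : ℤ) + 1) * i ≤ ((q : ℤ) - 1) * j}, Vw j) ↔
        ((q : ℤ) + 1) * i ≤ ((q : ℤ) - 1) * m) := by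
  classical
  intro i f hf hf0
  have hq1 : (1:ℤ) ≤ (q:ℤ) := by
    have : 0 < q := by rw [hq]; exact pow_pos (Nat.Prime.pos Fact.out) n
    exact_mod_cast this
  have hqnn : (0:ℤ) ≤ (q:ℤ) - 1 := by linarith
  have hcomp : ∀ z w : k,
      (ρ (uB (z+w)) : V →ₗ[k] V) f = (ρ (uB z) : V →ₗ[k] V) ((ρ (uB w) : V →ₗ[k] V) f) := by
    intro z w
    rw [← uB_mul, _root_.map_mul]
    rfl
  constructor
  · intro hmem
    have hindep := hInt.submodule_iSupIndep
    -- the lowest weight space consists of fixed vectors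
    have hVmF : Vw m ≤ ⨅ z : k, LinearMap.ker ((ρ (uB z) : V →ₗ[k] V) - LinearMap.id) := by
      intro w hw
      rw [Submodule.mem_iInf]
      intro z
      rw [LinearMap.mem_ker, LinearMap.sub_apply, LinearMap.id_apply, sub_eq_zero, hu z,
        LinearMap.sum_apply, Finset.sum_eq_single 0]
      · simp [hE0]
      · intro j hjr hj0
        have hbot : Vw (m - 2*j) = ⊥ := by
          by_contra hb
          have := hmin _ hb
          omega
        have hmem2 : E j w ∈ Vw (m - 2*j) := hEshift j m w hw
        rw [hbot, Submodule.mem_bot] at hmem2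
        simp [hmem2]
      · intro h
        exact absurd (Finset.mem_range.mpr (Nat.succ_pos N)) h
    have hFm : Vw m = ⨅ z : k, LinearMap.ker ((ρ (uB z) : V →ₗ[k] V) - LinearMap.id) := by
      apply Submodule.eq_of_le_of_finrank_le hVmF
      rw [hP]
      have : Module.finrank k (Vw m) ≠ 0 := by
        simpa [Submodule.finrank_eq_zero] using hm
      omega
    -- the top nonvanishing E-image of f
    set T := (Finset.range (N+1)).filter (fun j => E j f ≠ 0) with hTdef
    have hT : T.Nonempty := ⟨0, by simp [hTdef, hE0, hf0]⟩
    set j₀ := T.max' hT with hj₀def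
    have hj₀T : j₀ ∈ T := T.max'_mem hT
    have hj₀r : j₀ ∈ Finset.range (N+1) := (Finset.mem_filter.mp hj₀T).1
    have hv0 : E j₀ f ≠ 0 := (Finset.mem_filter.mp hj₀T).2
    have htop : ∀ c, j₀ < c → E c f = 0 := by
      intro c hc
      by_cases hcN : c ≤ N
      · by_contra h
        have hcT : c ∈ T := Finset.mem_filter.mpr ⟨Finset.mem_range.mpr (by omega), h⟩
        have := T.le_max' c hcT
        omega
      · rw [hEbound c (by omega)]
        rfl
    set v := E j₀ f with hvdef
    have hvm : v ∈ Vw (i - 2*(j₀:ℤ)) := hEshift j₀ i f hf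
    -- v is a fixed vector
    have hvfix : ∀ z : k, (ρ (uB z) : V →ₗ[k] V) v = v := by
      intro z
      have key : ∀ w : k,
          ∑ b ∈ Finset.range (N+1), w ^ b • ((ρ (uB z) : V →ₗ[k] V) (E b f))
            = ∑ b ∈ Finset.range (N+1), w ^ b •
                (∑ c ∈ Finset.range (N+1),
                  (if b ≤ c then (c.choose b : k) * z ^ (c - b) else 0) • E c f) := by
        intro w
        have lhs : ∑ b ∈ Finset.range (N+1), w ^ b • ((ρ (uB z) : V →ₗ[k] V) (E b f))
            = (ρ (uB z) : V →ₗ[k] V) ((ρ (uB w) : V →ₗ[k] V) f) := by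
          rw [hu w, LinearMap.sum_apply, map_sum]
          refine Finset.sum_congr rfl fun b _ => ?_
          rw [LinearMap.smul_apply, _root_.map_smul]
        have rhs : ∑ b ∈ Finset.range (N+1), w ^ b •
                (∑ c ∈ Finset.range (N+1),
                  (if b ≤ c then (c.choose b : k) * z ^ (c - b) else 0) • E c f)
            = (ρ (uB (z+w)) : V →ₗ[k] V) f := by
          rw [hu (z+w), LinearMap.sum_apply]
          have swap : ∑ b ∈ Finset.range (N+1), w ^ b •
                (∑ c ∈ Finset.range (N+1),
                  (if b ≤ c then (c.choose b : k) * z ^ (c - b) else 0) • E c f)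
              = ∑ c ∈ Finset.range (N+1), (∑ b ∈ Finset.range (N+1),
                  w ^ b * (if b ≤ c then (c.choose b : k) * z ^ (c - b) else 0)) • E c f := by
            simp only [Finset.smul_sum, smul_smul, Finset.sum_smul]
            exact Finset.sum_comm
          rw [swap]
          refine Finset.sum_congr rfl fun c hc => ?_
          have hcN : c ≤ N := Nat.lt_succ_iff.mp (Finset.mem_range.mp hc)
          have hscalar : ∑ b ∈ Finset.range (N+1),
              w ^ b * (if b ≤ c then (c.choose b : k) * z ^ (c - b) else 0) = (z+w)^c := by
            rw [← Finset.sum_subset (Finset.range_subset_range.mpr (by omega : c + 1 ≤ N + 1))]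
            · rw [add_comm z w, add_pow]
              refine Finset.sum_congr rfl fun b hb => ?_
              rw [if_pos (Nat.lt_succ_iff.mp (Finset.mem_range.mp hb))]
              ring
            · intro b _ hb
              rw [if_neg (by simp only [Finset.mem_range] at hb; omega), mul_zero]
          rw [hscalar, LinearMap.smul_apply]
        rw [lhs, rhs, hcomp]
      have hGH := vec_poly_eq' (N+1) _ _ key hj₀r
      have hH : (∑ c ∈ Finset.range (N+1),
          (if j₀ ≤ c then (c.choose j₀ : k) * z ^ (c - j₀) else 0) • E c f) = v := by
        rw [Finset.sum_eq_single j₀]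
        · simp [hvdef]
        · intro c _ hcne
          rcases lt_or_gt_of_ne hcne with hlt | hgt'
          · rw [if_neg (by omega), zero_smul]
          · rw [htop c hgt', smul_zero]
        · intro h
          exact absurd hj₀r h
      rw [hH] at hGH
      exact hGH
    have hvF : v ∈ ⨅ z : k, LinearMap.ker ((ρ (uB z) : V →ₗ[k] V) - LinearMap.id) := by
      rw [Submodule.mem_iInf]
      intro z
      rw [LinearMap.mem_ker, LinearMap.sub_apply, LinearMap.id_apply, sub_eq_zero]
      exact hvfix z
    have hvVm : v ∈ Vw m := by rw [hFm]; exact hvF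
    have hweq : i - 2*(j₀:ℤ) = m := by
      by_contra hne
      have hd := hindep (i - 2*(j₀:ℤ))
      have hsup : v ∈ (⨆ j, ⨆ (_ : j ≠ i - 2*(j₀:ℤ)), Vw j) :=
        Submodule.mem_iSup_of_mem m (Submodule.mem_iSup_of_mem (Ne.symm hne) hvVm)
      exact hv0 (Submodule.disjoint_def.mp hd v hvm hsup)
    -- conclude
    by_contra hgt
    push_neg at hgt
    have hsum : (ρ (uB 1) : V →ₗ[k] V) f = ∑ jj ∈ Finset.range (N+1), E jj f := by
      rw [hu 1, LinearMap.sum_apply]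
      simp
    rw [hsum] at hmem
    have hSsub : (⨆ j ∈ {j : ℤ | ((q:ℤ)+1)*i ≤ ((q:ℤ)-1)*j}, Vw j)
        ≤ ⨆ j, ⨆ (_ : j ≠ m), Vw j := by
      refine iSup₂_le fun j hj => ?_
      have hjm : j ≠ m := by
        rintro rfl
        rw [Set.mem_setOf_eq] at hj
        linarith
      exact le_iSup₂ (f := fun (j : ℤ) (_ : j ≠ m) => Vw j) j hjm
    have hrest : ∑ jj ∈ (Finset.range (N+1)).erase j₀, E jj f
        ∈ ⨆ j, ⨆ (_ : j ≠ m), Vw j := by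
      apply Submodule.sum_mem
      intro c hc
      have hne : (i - 2*(c:ℤ)) ≠ m := by
        rw [← hweq]
        have hcj : c ≠ j₀ := (Finset.mem_erase.mp hc).1
        omega
      exact Submodule.mem_iSup_of_mem _ (Submodule.mem_iSup_of_mem hne (hEshift c i f hf))
    have hvmem : v ∈ ⨆ j, ⨆ (_ : j ≠ m), Vw j := by
      have heq : v = (∑ jj ∈ Finset.range (N+1), E jj f)
          - ∑ jj ∈ (Finset.range (N+1)).erase j₀, E jj f :=
        eq_sub_of_add_eq (Finset.add_sum_erase _ (fun jj => E jj f) hj₀r)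
      rw [heq]
      exact Submodule.sub_mem _ (hSsub hmem) hrest
    exact hv0 (Submodule.disjoint_def.mp (hindep m) v hvVm hvmem)
  · intro hle
    rw [hu 1, LinearMap.sum_apply]
    apply Submodule.sum_mem
    intro j _
    rw [LinearMap.smul_apply, one_pow, one_smul]
    by_cases h0 : E j f = 0
    · rw [h0]
      exact Submodule.zero_mem _
    · have hne : Vw (i - 2*j) ≠ ⊥ := (Submodule.ne_bot_iff _).mpr ⟨E j f, hEshift j i f hf, h0⟩
      have hmle := hmin _ hne
      have hS : ((q:ℤ)+1)*i ≤ ((q:ℤ)-1)*(i - 2*(j:ℤ)) := le_trans hle (by nlinarith)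
      exact Submodule.mem_iSup_of_mem (i - 2*(j:ℤ))
        (Submodule.mem_iSup_of_mem hS (hEshift j i f hf))
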